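/- Let X = {x_1,...,x_n} ⊂ ℝ² and let s* minimise P(s) = Σ_i ‖s-x_i‖² + max_i ‖s-x_i‖². Then there exist nonnegative multipliers λ_1,...,λ_n summing to 1 with s* = Σ λ_j M_j, each λ_j > 0 only if ‖s*-x_j‖ = max_i ‖s*-x_i‖, and at most 3 of the λ_j are nonzero. -/

import Mathlib

open Finset Filter
open scoped RealInnerProductSpace Topology

set_option maxHeartbeats 1000000

lemma card_le_three' {ι : Type} [Fintype ι] (z : ι → EuclideanSpace ℝ (Fin 2))
    (hz : AffineIndependent ℝ z) : Fintype.card ι ≤ 3 := by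
  have h := hz.card_le_finrank_succ
  have h3 : Module.finrank ℝ (vectorSpan ℝ (Set.range z)) ≤
      Module.finrank ℝ (EuclideanSpace ℝ (Fin 2)) := Submodule.finrank_le _
  have h2 : Module.finrank ℝ (EuclideanSpace ℝ (Fin 2)) = 2 := by
    simp [finrank_euclideanSpace]
  omega

lemma key_mem_hull
    {n : ℕ} [NeZero n] (x : Fin n → EuclideanSpace ℝ (Fin 2))
    (P : EuclideanSpace ℝ (Fin 2) → ℝ)
    (hP : ∀ s, P s = (∑ i, ‖s - x i‖ ^ 2) +
      Finset.univ.sup' Finset.univ_nonempty (fun i => ‖s - x i‖ ^ 2))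
    (Mc : Fin n → EuclideanSpace ℝ (Fin 2))
    (hMc : ∀ j, Mc j = ((n : ℝ) + 1)⁻¹ • (x j + ∑ i, x i))
    (s : EuclideanSpace ℝ (Fin 2)) (hs : ∀ t, P s ≤ P t) :
    s ∈ convexHull ℝ (Mc '' {j | ‖s - x j‖ =
      Finset.univ.sup' Finset.univ_nonempty (fun i => ‖s - x i‖)}) := by
  classical
  by_contra hK
  set m : ℝ := Finset.univ.sup' Finset.univ_nonempty (fun i => ‖s - x i‖) with hm
  set A : Set (Fin n) := {j | ‖s - x j‖ = m} with hA
  have hnpos : (0:ℝ) < (n:ℝ) + 1 := by positivity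
  -- separation
  obtain ⟨f, u, hfu, hus⟩ := geometric_hahn_banach_closed_point (convex_convexHull ℝ _)
      ((Set.Finite.image _ (Set.toFinite _)).isClosed_convexHull (𝕜 := ℝ)) hK
  set w : EuclideanSpace ℝ (Fin 2) := -(InnerProductSpace.toDual ℝ (EuclideanSpace ℝ (Fin 2))).symm f with hwdef
  set b : Fin n → ℝ := fun i => f (x i) - f s with hbdef
  have hb : ∀ i, ⟪s - x i, w⟫ = b i := by
    intro i
    rw [real_inner_comm, hwdef, inner_neg_left, InnerProductSpace.toDual_symm_apply]
    simp [hbdef, map_sub]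
  have hexp : ∀ (t : ℝ) (i : Fin n),
      ‖s + t • w - x i‖ ^ 2 = ‖s - x i‖ ^ 2 + 2 * t * b i + t ^ 2 * ‖w‖ ^ 2 := by
    intro t i
    have h1 : s + t • w - x i = (s - x i) + t • w := by abel
    rw [h1, norm_add_sq_real, real_inner_smul_right, hb, norm_smul]
    simp [mul_pow]
    ring
  -- argmax set as finset, argmax of b
  have hAne : (Finset.univ.filter (fun j : Fin n => ‖s - x j‖ = m)).Nonempty := by
    obtain ⟨j, hj, hjv⟩ := Finset.exists_mem_eq_sup' Finset.univ_nonempty (fun i => ‖s - x i‖)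
    exact ⟨j, by simp [hjv.symm]; exact hm.symm⟩
  obtain ⟨j0, hj0A, hj0⟩ := Finset.exists_mem_eq_sup' hAne b
  have hj0m : ‖s - x j0‖ = m := (Finset.mem_filter.mp hj0A).2
  have hbj0 : ∀ j, ‖s - x j‖ = m → b j ≤ b j0 := by
    intro j hj
    rw [← hj0]
    exact Finset.le_sup' b (by simp [hj])
  -- D < 0
  set D : ℝ := (∑ i, b i) + b j0 with hD
  have hMcj0 : ((n : ℝ) + 1) * f (Mc j0) = f (x j0) + ∑ i, f (x i) := by
    rw [hMc j0, map_smul, smul_eq_mul, map_add, map_sum]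
    field_simp
  have hMcK : f (Mc j0) < u := hfu _ (subset_convexHull ℝ _ ⟨j0, hj0m, rfl⟩)
  have hDneg : D < 0 := by
    have h1 : D = ((n:ℝ) + 1) * (f (Mc j0) - f s) := by
      rw [hD, hbdef]
      simp only [Finset.sum_sub_distrib, Finset.sum_const, Finset.card_univ, Fintype.card_fin,
        nsmul_eq_mul]
      rw [mul_sub, hMcj0]
      ring
    rw [h1]
    have : f (Mc j0) - f s < 0 := by linarith
    exact mul_neg_of_pos_of_neg hnpos this
  -- sup of squares
  have hsupm : Finset.univ.sup' Finset.univ_nonempty (fun i => ‖s - x i‖ ^ 2) = m ^ 2 := by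
    apply le_antisymm
    · apply Finset.sup'_le
      intro i _
      exact pow_le_pow_left₀ (norm_nonneg _) (Finset.le_sup' (fun i => ‖s - x i‖) (Finset.mem_univ i)) 2
    · rw [← hj0m]
      exact Finset.le_sup' (fun i => ‖s - x i‖ ^ 2) (Finset.mem_univ j0)
  -- eventually small t gives smaller P
  have hev1 : ∀ᶠ t in 𝓝[>] (0:ℝ), ∀ i, ‖s - x i‖ ^ 2 + 2 * t * b i ≤ m ^ 2 + 2 * t * b j0 := by
    rw [Filter.eventually_all]
    intro i
    by_cases hiA : ‖s - x i‖ = m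
    · filter_upwards [self_mem_nhdsWithin] with t ht
      have ht' : (0:ℝ) ≤ t := le_of_lt ht
      have := hbj0 i hiA
      rw [hiA]
      nlinarith
    · have hle : ‖s - x i‖ ≤ m := Finset.le_sup' (fun i => ‖s - x i‖) (Finset.mem_univ i)
      have hlt : ‖s - x i‖ ^ 2 < m ^ 2 := by
        have : ‖s - x i‖ < m := lt_of_le_of_ne hle hiA
        nlinarith [norm_nonneg (s - x i)]
      have hcont : ContinuousAt (fun t : ℝ => ‖s - x i‖ ^ 2 + 2 * t * b i - (m ^ 2 + 2 * t * b j0)) 0 := by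
        fun_prop
      have h0 : (fun t : ℝ => ‖s - x i‖ ^ 2 + 2 * t * b i - (m ^ 2 + 2 * t * b j0)) 0 < 0 := by
        simpa using hlt
      have := hcont.eventually_lt continuousAt_const h0
      filter_upwards [this.filter_mono nhdsWithin_le_nhds] with t ht
      linarith
  have hev2 : ∀ᶠ t in 𝓝[>] (0:ℝ), 2 * D + ((n:ℝ) + 1) * t * ‖w‖ ^ 2 < 0 := by
    have hcont : ContinuousAt (fun t : ℝ => 2 * D + ((n:ℝ) + 1) * t * ‖w‖ ^ 2) 0 := by fun_prop
    have h0 : (fun t : ℝ => 2 * D + ((n:ℝ) + 1) * t * ‖w‖ ^ 2) 0 < 0 := by simpa using by linarith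
    exact (hcont.eventually_lt continuousAt_const h0).filter_mono nhdsWithin_le_nhds
  have hev : ∀ᶠ t in 𝓝[>] (0:ℝ), P (s + t • w) < P s := by
    filter_upwards [hev1, hev2, self_mem_nhdsWithin] with t h1 h2 ht
    have htpos : (0:ℝ) < t := ht
    have hsum : ∑ i, ‖s + t • w - x i‖ ^ 2
        = (∑ i, ‖s - x i‖ ^ 2) + 2 * t * (∑ i, b i) + (n:ℝ) * (t ^ 2 * ‖w‖ ^ 2) := by
      rw [Finset.sum_congr rfl (fun i _ => hexp t i)]
      rw [Finset.sum_add_distrib, Finset.sum_add_distrib, Finset.sum_const, Finset.card_univ,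
        Fintype.card_fin, nsmul_eq_mul, ← Finset.mul_sum]
    have hsup : Finset.univ.sup' Finset.univ_nonempty (fun i => ‖s + t • w - x i‖ ^ 2)
        ≤ m ^ 2 + 2 * t * b j0 + t ^ 2 * ‖w‖ ^ 2 := by
      apply Finset.sup'_le
      intro i _
      rw [hexp t i]
      linarith [h1 i]
    have hneg : t * (2 * D + ((n:ℝ) + 1) * t * ‖w‖ ^ 2) < 0 := mul_neg_of_pos_of_neg htpos h2
    rw [hP, hP, hsupm, hsum]
    have hDexp : D = (∑ i, b i) + b j0 := hD
    nlinarith [hsup]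
  obtain ⟨t, ht⟩ := hev.exists
  exact absurd (hs (s + t • w)) (not_le.mpr ht)

/-- There exists a KKT multiplier set for the quadratic min-power centre with at most 3
nonzero multipliers. -/
theorem minPower_centre_KKT_at_most_three
    {n : ℕ} [NeZero n] (x : Fin n → EuclideanSpace ℝ (Fin 2))
    (P : EuclideanSpace ℝ (Fin 2) → ℝ)
    (hP : ∀ s, P s = (∑ i, ‖s - x i‖ ^ 2) +
      Finset.univ.sup' Finset.univ_nonempty (fun i => ‖s - x i‖ ^ 2))
    (Mc : Fin n → EuclideanSpace ℝ (Fin 2))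
    (hMc : ∀ j, Mc j = ((n : ℝ) + 1)⁻¹ • (x j + ∑ i, x i))
    (s : EuclideanSpace ℝ (Fin 2)) (hs : ∀ t, P s ≤ P t) :
    ∃ lam : Fin n → ℝ, (∀ j, 0 ≤ lam j) ∧ (∑ j, lam j = 1) ∧
      s = ∑ j, lam j • Mc j ∧
      (∀ j, 0 < lam j →
        ‖s - x j‖ = Finset.univ.sup' Finset.univ_nonempty (fun i => ‖s - x i‖)) ∧
      (Finset.univ.filter (fun j => lam j ≠ 0)).card ≤ 3 := by
  classical
  have hmem := key_mem_hull x P hP Mc hMc s hs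
  obtain ⟨ι, hι, z, wt, hrange, hindep, hpos, hsum1, hrep⟩ :=
    eq_pos_convex_span_of_mem_convexHull hmem
  letI : Fintype ι := hι
  have hcard : Fintype.card ι ≤ 3 := card_le_three' z hindep
  have hchoice : ∀ i : ι, ∃ j : Fin n, ‖s - x j‖ =
      Finset.univ.sup' Finset.univ_nonempty (fun i => ‖s - x i‖) ∧ Mc j = z i := by
    intro i
    obtain ⟨j, hj1, hj2⟩ := hrange (Set.mem_range_self i)
    exact ⟨j, hj1, hj2⟩
  choose g hg1 hg2 using hchoice
  set lam : Fin n → ℝ := fun j => ∑ i : ι, if g i = j then wt i else 0 with hlam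
  have hnonneg : ∀ j, 0 ≤ lam j := by
    intro j
    apply Finset.sum_nonneg
    intro i _
    split
    · exact (hpos i).le
    · exact le_refl 0
  refine ⟨lam, hnonneg, ?_, ?_, ?_, ?_⟩
  · rw [hlam]
    rw [Finset.sum_comm]
    simpa using hsum1
  · rw [hlam]
    simp only [Finset.sum_smul, ite_smul, zero_smul]
    rw [Finset.sum_comm]
    have : ∀ i : ι, (∑ j, if g i = j then wt i • Mc j else 0) = wt i • z i := by
      intro i
      rw [Finset.sum_ite_eq]
      simp [hg2 i]
    rw [Finset.sum_congr rfl (fun i _ => this i)]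
    exact hrep.symm
  · intro j hj
    have : lam j ≠ 0 := ne_of_gt hj
    obtain ⟨i, _, hi⟩ := Finset.exists_ne_zero_of_sum_ne_zero (by simpa [hlam] using this)
    have hgi : g i = j := by
      by_contra h
      simp [h] at hi
    rw [← hgi]
    exact hg1 i
  · have hsubset : (Finset.univ.filter (fun j => lam j ≠ 0)) ⊆ Finset.univ.image g := by
      intro j hj
      obtain ⟨i, _, hi⟩ := Finset.exists_ne_zero_of_sum_ne_zero
        (by simpa [hlam] using (Finset.mem_filter.mp hj).2)
      have hgi : g i = j := by
        by_contra h
        simp [h] at hi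
      exact Finset.mem_image.mpr ⟨i, Finset.mem_univ i, hgi⟩
    calc (Finset.univ.filter (fun j => lam j ≠ 0)).card
        ≤ (Finset.univ.image g).card := Finset.card_le_card hsubset
      _ ≤ Finset.univ.card := Finset.card_image_le
      _ = Fintype.card ι := Finset.card_univ
      _ ≤ 3 := hcard
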